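/- Let G be any group. Then S(G) = ∩_{N ⊴_f G} F_N(G), the intersection of the subgroups F_N(G) over all normal subgroups N of G of finite index. -/

import Mathlib

/-- `S(G)` is the set of `x ∈ G` such that `x ^ |G:H| ∈ H` for every finite-index
subgroup `H ≤ G`. -/
def Sset (G : Type*) [Group G] : Set G :=
  {x : G | ∀ H : Subgroup G, H.index ≠ 0 → x ^ H.index ∈ H}

/-- The Fitting subgroup of a group: the subgroup generated by all nilpotent normal
subgroups.  For a finite group this is the largest nilpotent normal subgroup. -/
def fittingSubgroup (G : Type*) [Group G] : Subgroup G :=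
  sSup {N : Subgroup G | N.Normal ∧ Group.IsNilpotent N}

/-- `F_N(G)`: the preimage in `G` of the Fitting subgroup of `G/N` under the quotient
map, for `N ⊴ G`. -/
def fittingPreimage (G : Type*) [Group G] (N : Subgroup G) (hN : N.Normal) : Subgroup G :=
  letI := hN
  (fittingSubgroup (G ⧸ N)).comap (QuotientGroup.mk' N)

open Subgroup Pointwise

section FiniteLemmas

variable {Q : Type*} [Group Q] [Finite Q]

/-- In a finite nilpotent group, `z ^ [Q:K] ∈ K` for every subgroup `K`. -/
lemma pow_index_mem_of_nilpotent [Group.IsNilpotent Q] :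
    ∀ (n : ℕ) (K : Subgroup Q), K.index = n → ∀ z : Q, z ^ K.index ∈ K := by
  intro n
  induction n using Nat.strong_induction_on with
  | _ n ih =>
    intro K hK z
    rcases eq_or_ne K ⊤ with rfl | hKtop
    · exact mem_top _
    · have hnc := normalizerCondition_of_isNilpotent (G := Q)
      have hlt : K < Subgroup.normalizer (K : Set Q) := hnc K (lt_top_iff_ne_top.mpr hKtop)
      set N := Subgroup.normalizer (K : Set Q) with hNdef
      have hle : K ≤ N := hlt.le
      have hmul : K.relIndex N * N.index = K.index := relIndex_mul_index hle
      have hi0 : K.index ≠ 0 := index_ne_zero_of_finite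
      have hN0 : N.index ≠ 0 := index_ne_zero_of_finite
      have hr1 : K.relIndex N ≠ 1 := by
        intro h1
        rw [relIndex_eq_one] at h1
        exact hlt.not_ge h1
      have hr0 : K.relIndex N ≠ 0 := by
        intro h; rw [h, zero_mul] at hmul; exact hi0 hmul.symm
      have hNlt : N.index < K.index := by
        rw [← hmul]
        have h2 : 2 ≤ K.relIndex N := by omega
        have := Nat.mul_le_mul_right N.index h2
        omega
      have hzN : z ^ N.index ∈ N := ih N.index (hK ▸ hNlt) N rfl z
      haveI : (K.subgroupOf N).Normal := Subgroup.normal_in_normalizer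
      have h2 : (⟨z ^ N.index, hzN⟩ : N) ^ (K.subgroupOf N).index ∈ K.subgroupOf N :=
        Subgroup.pow_index_mem _ _
      rw [mem_subgroupOf] at h2
      have h3 : (z ^ N.index) ^ K.relIndex N ∈ K := by
        simpa [relIndex] using h2
      have h4 : K.index = N.index * K.relIndex N := by rw [Nat.mul_comm, hmul]
      rw [h4, pow_mul]
      exact h3

/-- Index computation: for `M` normal, `[M ⊔ K : K] = [M : M ⊓ K]`. -/
lemma relindex_sup_eq_relindex (M K : Subgroup Q) [M.Normal] :
    K.relIndex (K ⊔ M) = K.relIndex M := by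
  have h1 : (K ⊓ M).relIndex K * K.relIndex (K ⊔ M) = (K ⊓ M).relIndex (K ⊔ M) :=
    relIndex_mul_relIndex _ _ _ inf_le_left le_sup_left
  have h2 : (K ⊓ M).relIndex M * M.relIndex (K ⊔ M) = (K ⊓ M).relIndex (K ⊔ M) :=
    relIndex_mul_relIndex _ _ _ inf_le_right le_sup_right
  have h3 : (K ⊓ M).relIndex K = M.relIndex K := by
    rw [inf_comm, inf_relIndex_right]
  have h4 : (K ⊓ M).relIndex M = K.relIndex M := by
    rw [inf_relIndex_right]
  have h5 : M.relIndex (K ⊔ M) = M.relIndex K := relIndex_sup_right K M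
  have h6 : M.relIndex K ≠ 0 := by
    rw [relIndex]; exact index_ne_zero_of_finite
  rw [h3] at h1
  rw [h4, h5] at h2
  have := h1.trans h2.symm
  -- M.relindex K * K.relindex (K ⊔ M) = K.relindex M * M.relindex K
  exact Nat.eq_of_mul_eq_mul_left (Nat.pos_of_ne_zero h6) (by rw [this, Nat.mul_comm])

/-- In a finite group, if `M` is a nilpotent normal subgroup and `y ∈ M`, then
`y ^ [Q:K] ∈ K` for every subgroup `K`. -/
lemma pow_index_mem_of_mem_nilpotent_normal (M : Subgroup Q) [M.Normal]
    [Group.IsNilpotent M] (K : Subgroup Q) {y : Q} (hy : y ∈ M) : y ^ K.index ∈ K := by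
  have h1 : K.relIndex (K ⊔ M) * (K ⊔ M).index = K.index := relIndex_mul_index le_sup_left
  have h2 : K.relIndex (K ⊔ M) = K.relIndex M := relindex_sup_eq_relindex M K
  have h3 : (⟨y, hy⟩ : M) ^ (K.subgroupOf M).index ∈ K.subgroupOf M :=
    pow_index_mem_of_nilpotent _ (K.subgroupOf M) rfl _
  rw [mem_subgroupOf] at h3
  have h4 : y ^ K.relIndex M ∈ K := by
    simpa [relIndex] using h3
  have h5 : K.index = K.relIndex M * (K ⊔ M).index := by rw [← h2, h1]
  rw [h5, pow_mul]
  exact K.pow_mem h4 _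

/-- The `p`-core: intersection of all Sylow `p`-subgroups. -/
def pCore (p : ℕ) (Q : Type*) [Group Q] : Subgroup Q :=
  ⨅ P : Sylow p Q, (P : Subgroup Q)

instance instFiniteSylow (p : ℕ) : Finite (Sylow p Q) :=
  Finite.of_injective (fun P : Sylow p Q => (P : Subgroup Q))
    (fun _ _ h => Sylow.ext h)

lemma pCore_normal (p : ℕ) : (pCore p Q).Normal := by
  constructor
  intro x hx g
  rw [pCore, Subgroup.mem_iInf] at hx ⊢
  intro P
  have h1 : x ∈ ((g⁻¹ • P : Sylow p Q) : Subgroup Q) := hx _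
  rw [Sylow.coe_subgroup_smul, Subgroup.mem_pointwise_smul_iff_inv_smul_mem] at h1
  simpa using h1

lemma pCore_isPGroup (p : ℕ) [Fact p.Prime] : IsPGroup p (pCore p Q) :=
  (Classical.arbitrary (Sylow p Q)).isPGroup'.to_le (iInf_le _ _)

lemma pCore_isNilpotent (p : ℕ) [Fact p.Prime] : Group.IsNilpotent (pCore p Q) :=
  (pCore_isPGroup p).isNilpotent

/-- Coprime power pull-back: if `y ^ m ∈ K` and `m` is coprime to the order of `y`,
then `y ∈ K`. -/
lemma mem_of_pow_mem_of_coprime (K : Subgroup Q) {y : Q} {m : ℕ}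
    (hco : Nat.Coprime m (orderOf y)) (h : y ^ m ∈ K) : y ∈ K := by
  set d := orderOf y with hd
  have hd0 : 0 < d := orderOf_pos y
  have ht : 0 < d.totient := Nat.totient_pos.mpr hd0
  have h1 : m ^ d.totient ≡ 1 [MOD d] := Nat.ModEq.pow_totient hco
  have h2 : y ^ (m ^ d.totient) = y ^ 1 := by
    rw [pow_eq_pow_iff_modEq]; exact h1
  have h3 : m ^ d.totient = m * m ^ (d.totient - 1) := by
    conv_lhs => rw [← Nat.succ_pred_eq_of_pos ht]
    rw [pow_succ']
    rfl
  have h4 : y = (y ^ m) ^ (m ^ (d.totient - 1)) := by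
    rw [← pow_mul, ← h3, h2, pow_one]
  rw [h4]
  exact K.pow_mem h _

/-- If `y` has `p`-power order and `y ^ [Q:P] ∈ P` for every Sylow `p`-subgroup `P`,
then `y` lies in the `p`-core. -/
lemma mem_pCore_of_pPow_order (p : ℕ) [Fact p.Prime] {y : Q} {k : ℕ}
    (hyk : orderOf y ∣ p ^ k)
    (hpow : ∀ P : Sylow p Q, y ^ (P : Subgroup Q).index ∈ P) : y ∈ pCore p Q := by
  rw [pCore, Subgroup.mem_iInf]
  intro P
  have hnd : ¬ p ∣ (P : Subgroup Q).index := P.not_dvd_index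
  have h1 : Nat.Coprime p ((P : Subgroup Q).index) :=
    (Nat.Prime.coprime_iff_not_dvd Fact.out).mpr hnd
  have h2 : Nat.Coprime (orderOf y) ((P : Subgroup Q).index) :=
    Nat.Coprime.coprime_dvd_left hyk (h1.pow_left k)
  exact mem_of_pow_mem_of_coprime _ h2.symm (hpow P)

/-- Primary decomposition induction principle: to show `x ∈ D` it suffices to know that
all prime-power-order elements of `⟨x⟩` are in `D`. -/
lemma mem_of_primary_decomposition (D : Subgroup Q) :
    ∀ (n : ℕ) (x : Q), orderOf x = n →
      (∀ p : ℕ, p.Prime → ∀ y ∈ Subgroup.zpowers x, (∃ k, orderOf y ∣ p ^ k) → y ∈ D) →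
      x ∈ D := by
  intro n
  induction n using Nat.strong_induction_on with
  | _ n ih =>
    intro x hn hyp
    have h0 : orderOf x ≠ 0 := (orderOf_pos x).ne'
    rcases eq_or_ne (orderOf x) 1 with h1 | h1
    · rw [orderOf_eq_one_iff] at h1
      rw [h1]; exact D.one_mem
    · set N := orderOf x with hNdef
      set p := N.minFac with hpdef
      have hp : p.Prime := Nat.minFac_prime h1
      haveI : Fact p.Prime := ⟨hp⟩
      set k := N.factorization p with hkdef
      set s := N / p ^ k with hsdef
      have hks : p ^ k * s = N := Nat.ordProj_mul_ordCompl_eq_self N p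
      have hco : Nat.Coprime (p ^ k) s :=
        Nat.Coprime.pow_left _ (Nat.coprime_ordCompl hp h0)
      have hk0 : 0 < k := hp.factorization_pos_of_dvd h0 (Nat.minFac_dvd N)
      have hpk1 : 1 < p ^ k := Nat.one_lt_pow hk0.ne' hp.one_lt
      obtain ⟨b, hb⟩ : ∃ b, s * b % p ^ k = 1 :=
        by obtain ⟨m, -, hm⟩ := Nat.exists_mul_mod_eq_one_of_coprime hco.symm hpk1; exact ⟨m, hm⟩
      have hbmod : s * b ≡ 1 [MOD p ^ k] := by
        unfold Nat.ModEq
        rw [hb, Nat.mod_eq_of_lt hpk1]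
      set y := x ^ (s * b) with hydef
      set z := y⁻¹ * x with hzdef
      have hyy : y ∈ Subgroup.zpowers x := Subgroup.npow_mem_zpowers x _
      have hcomm : Commute y x := (Commute.refl x).pow_left _
      have hyo : orderOf y ∣ p ^ k := by
        apply orderOf_dvd_of_pow_eq_one
        rw [← pow_mul]
        apply orderOf_dvd_iff_pow_eq_one.mp
        rw [← hNdef, ← hks]
        exact ⟨b, by ring⟩
      have hyD : y ∈ D := hyp p hp y hyy ⟨k, hyo⟩
      have hs0 : 0 < s := Nat.ordCompl_pos p h0
      have hslt : s < N := by
        rw [hsdef]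
        exact Nat.div_lt_self (Nat.pos_of_ne_zero h0) hpk1
      have hzo : orderOf z ∣ s := by
        apply orderOf_dvd_of_pow_eq_one
        have hys : y ^ s = x ^ s := by
          rw [hydef, ← pow_mul, pow_eq_pow_iff_modEq, ← hNdef, ← hks]
          calc s * b * s ≡ 1 * s [MOD p ^ k * s] := Nat.ModEq.mul_right' s hbmod
            _ = s := one_mul s
        have : z ^ s = (y ^ s)⁻¹ * x ^ s := by
          rw [hzdef, (hcomm.inv_left).mul_pow, inv_pow]
        rw [this, hys, inv_mul_cancel]
      have hzD : z ∈ D := by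
        refine ih (orderOf z) ?_ z rfl ?_
        · rw [← hn]
          exact lt_of_le_of_lt (Nat.le_of_dvd hs0 hzo) hslt
        · intro q hq w hw hwk
          refine hyp q hq w ?_ hwk
          have hzx : z ∈ Subgroup.zpowers x := by
            exact mul_mem (inv_mem hyy) (Subgroup.mem_zpowers x)
          exact Subgroup.zpowers_le.mpr hzx hw
      have hxyz : x = y * z := by
        rw [hzdef, mul_inv_cancel_left]
      rw [hxyz]
      exact D.mul_mem hyD hzD

/-- Hard direction, finite case: `Sset Q ⊆ F(Q)`. -/
lemma mem_fitting_of_pow_index_mem {x : Q}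
    (hx : ∀ K : Subgroup Q, x ^ K.index ∈ K) : x ∈ fittingSubgroup Q := by
  apply mem_of_primary_decomposition _ (orderOf x) x rfl
  rintro p hp y hy ⟨k, hyk⟩
  haveI : Fact p.Prime := ⟨hp⟩
  have hypow : ∀ K : Subgroup Q, y ^ K.index ∈ K := by
    intro K
    obtain ⟨a, rfl⟩ := hy
    rw [← zpow_natCast, ← zpow_mul, mul_comm, zpow_mul, zpow_natCast]
    exact K.zpow_mem (hx K) a
  have hyOp : y ∈ pCore p Q := mem_pCore_of_pPow_order p hyk (fun P => hypow _)
  have hle : pCore p Q ≤ fittingSubgroup Q :=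
    le_sSup ⟨pCore_normal p, pCore_isNilpotent p⟩
  exact hle hyOp

/-- Easy direction, finite case, step A: the Fitting subgroup is contained in the
join of the `p`-cores. -/
lemma fitting_le_iSup_pCore :
    fittingSubgroup Q ≤ ⨆ p ∈ (Nat.card Q).primeFactors, pCore p Q := by
  apply sSup_le
  rintro M ⟨hMn, hMnil⟩
  haveI := hMn
  haveI := hMnil
  intro x hxM
  apply mem_of_primary_decomposition _ (orderOf x) x rfl
  rintro p hp y hy ⟨k, hyk⟩
  haveI : Fact p.Prime := ⟨hp⟩
  rcases eq_or_ne y 1 with rfl | hy1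
  · exact one_mem _
  · have hyM : y ∈ M := Subgroup.zpowers_le.mpr hxM hy
    have hyOp : y ∈ pCore p Q := by
      apply mem_pCore_of_pPow_order p hyk
      intro P
      exact pow_index_mem_of_mem_nilpotent_normal M _ hyM
    have hpdvd : p ∣ Nat.card Q := by
      have h1 : orderOf y ∣ Nat.card Q := orderOf_dvd_natCard y
      have h2 : p ∣ orderOf y := by
        obtain ⟨j, hj, hyj⟩ := (Nat.dvd_prime_pow hp).mp hyk
        have hj0 : j ≠ 0 := by
          rintro rfl
          rw [pow_zero] at hyj
          exact hy1 (orderOf_eq_one_iff.mp hyj)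
        rw [hyj]
        exact dvd_pow_self p hj0
      exact h2.trans h1
    have hmem : p ∈ (Nat.card Q).primeFactors :=
      Nat.mem_primeFactors.mpr ⟨hp, hpdvd, Nat.card_pos.ne'⟩
    exact le_biSup (fun p => pCore p Q) hmem hyOp

/-- Easy direction, finite case, step B: elements of a join of `p`-cores satisfy the
power-index condition. -/
lemma pow_index_mem_of_mem_iSup_pCore :
    ∀ (t : Finset ℕ), (∀ p ∈ t, p.Prime) →
      ∀ x ∈ (⨆ p ∈ t, pCore p Q), ∀ K : Subgroup Q, x ^ K.index ∈ K := by
  intro t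
  induction t using Finset.induction_on with
  | empty =>
    intro _ x hx K
    have hb : (⨆ p ∈ (∅ : Finset ℕ), pCore p Q) = ⊥ := by simp
    rw [hb, Subgroup.mem_bot] at hx
    rw [hx, one_pow]
    exact K.one_mem
  | @insert q t hq ih =>
    intro hprime x hx K
    rw [Finset.iSup_insert] at hx
    haveI hqp : Fact q.Prime := ⟨hprime q (Finset.mem_insert_self q t)⟩
    haveI : (pCore q Q).Normal := pCore_normal q
    haveI : Group.IsNilpotent (pCore q Q) := pCore_isNilpotent q
    have hx' : x ∈ (pCore q Q : Set Q) * ((⨆ p ∈ t, pCore p Q : Subgroup Q) : Set Q) := by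
      rw [← Subgroup.normal_mul]
      exact hx
    obtain ⟨a, ha, b, hb, rfl⟩ := hx'
    have hB : (⨆ p ∈ t, pCore p Q) ≤ Subgroup.centralizer {a} := by
      refine iSup₂_le fun p hpt => ?_
      haveI : Fact p.Prime := ⟨hprime p (Finset.mem_insert_of_mem hpt)⟩
      intro c hc
      rw [Subgroup.mem_centralizer_iff]
      intro g hg
      rw [Set.mem_singleton_iff] at hg
      subst hg
      have hne : q ≠ p := by rintro rfl; exact hq hpt
      have hdis : Disjoint (pCore q Q) (pCore p Q) :=
        IsPGroup.disjoint_of_ne q p hne _ _ (pCore_isPGroup q) (pCore_isPGroup p)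
      exact Subgroup.commute_of_normal_of_disjoint _ _ (pCore_normal q) (pCore_normal p)
        hdis g c ha hc
    have hcomm : Commute a b := by
      have h1 := hB hb
      rw [Subgroup.mem_centralizer_iff] at h1
      exact h1 a rfl
    rw [hcomm.mul_pow]
    exact K.mul_mem (pow_index_mem_of_mem_nilpotent_normal (pCore q Q) K ha)
      (ih (fun p hp => hprime p (Finset.mem_insert_of_mem hp)) b hb K)

/-- Easy direction, finite case. -/
lemma pow_index_mem_of_mem_fitting {x : Q} (hx : x ∈ fittingSubgroup Q) (K : Subgroup Q) :
    x ^ K.index ∈ K := by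
  have h1 := fitting_le_iSup_pCore hx
  exact pow_index_mem_of_mem_iSup_pCore _
    (fun p hp => Nat.prime_of_mem_primeFactors hp) x h1 K

end FiniteLemmas

/-- For any group `G`, `S(G)` is the intersection of the subgroups `F_N(G)` over all
normal subgroups `N ⊴ G` of finite index. -/
theorem sSet_eq_iInter_fittingPreimage {G : Type*} [Group G] :
    Sset G = ⋂ (N : Subgroup G) (hN : N.Normal) (_ : N.index ≠ 0),
      (fittingPreimage G N hN : Set G) := by
  ext x
  simp only [Sset, Set.mem_setOf_eq, Set.mem_iInter, SetLike.mem_coe]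
  constructor
  · intro hx N hN hNi
    haveI := hN
    haveI : N.FiniteIndex := ⟨hNi⟩
    show x ∈ (fittingSubgroup (G ⧸ N)).comap (QuotientGroup.mk' N)
    rw [Subgroup.mem_comap]
    apply mem_fitting_of_pow_index_mem
    intro K
    have hidx : (K.comap (QuotientGroup.mk' N)).index = K.index :=
      K.index_comap_of_surjective (QuotientGroup.mk'_surjective N)
    have h1 := hx (K.comap (QuotientGroup.mk' N))
      (by rw [hidx]; exact Subgroup.index_ne_zero_of_finite)
    rw [hidx, Subgroup.mem_comap, map_pow] at h1
    exact h1
  · intro hx H hHi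
    haveI : H.FiniteIndex := ⟨hHi⟩
    haveI hNn : H.normalCore.Normal := H.normalCore_normal
    have hm := hx H.normalCore hNn FiniteIndex.index_ne_zero
    have hm' : (QuotientGroup.mk' H.normalCore) x ∈ fittingSubgroup (G ⧸ H.normalCore) :=
      Subgroup.mem_comap.mp hm
    have h2 := pow_index_mem_of_mem_fitting hm'
      (H.map (QuotientGroup.mk' H.normalCore))
    have hcm : (H.map (QuotientGroup.mk' H.normalCore)).comap
        (QuotientGroup.mk' H.normalCore) = H := by
      rw [Subgroup.comap_map_eq, QuotientGroup.ker_mk']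
      exact sup_eq_left.mpr H.normalCore_le
    have hidx : (H.map (QuotientGroup.mk' H.normalCore)).index = H.index := by
      conv_rhs => rw [← hcm]
      rw [Subgroup.index_comap_of_surjective _ (QuotientGroup.mk'_surjective H.normalCore)]
    rw [hidx] at h2
    have h3 : x ^ H.index ∈ (H.map (QuotientGroup.mk' H.normalCore)).comap
        (QuotientGroup.mk' H.normalCore) := by
      rw [Subgroup.mem_comap, map_pow]
      exact h2
    rwa [hcm] at h3
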